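/- Let K be a field and q ∈ K, q ≠ 0. Then the center Z(H_q) of the q-deformed Heisenberg algebra H_q over K is an integral domain: it is a nontrivial commutative ring in which the product of any two nonzero elements is nonzero. -/

import Mathlib

noncomputable section

open Classical in
/-- The `q`-integer `{n}_q = (qⁿ − 1)/(q − 1)` for `q ≠ 1`, and `{n}_q = n·1_K` for `q = 1`. -/
def qInt (K : Type*) [Field K] (q : K) (n : ℤ) : K :=
  if q = 1 then (n : K) else (q ^ n - 1) / (q - 1)

/-- The defining relation `AB = q·BA + 1` of the `q`-deformed Heisenberg algebra,
imposed on the free algebra on two generators. -/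
inductive qHeisRel (K : Type*) [Field K] (q : K) :
    FreeAlgebra K (Fin 2) → FreeAlgebra K (Fin 2) → Prop
  | rel : qHeisRel K q (FreeAlgebra.ι K 0 * FreeAlgebra.ι K 1)
      (q • (FreeAlgebra.ι K 1 * FreeAlgebra.ι K 0) + 1)

/-- The `q`-deformed Heisenberg algebra `H_q = K⟨A,B⟩/⟨AB − qBA − 1⟩`. -/
abbrev qHeis (K : Type*) [Field K] (q : K) : Type _ := RingQuot (qHeisRel K q)

/-- The generator `A` of `H_q`. -/
def qA (K : Type*) [Field K] (q : K) : qHeis K q :=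
  RingQuot.mkAlgHom K (qHeisRel K q) (FreeAlgebra.ι K 0)

/-- The generator `B` of `H_q`. -/
def qB (K : Type*) [Field K] (q : K) : qHeis K q :=
  RingQuot.mkAlgHom K (qHeisRel K q) (FreeAlgebra.ι K 1)

namespace QHAux

variable {K : Type*} [Field K] (q : K)

/-- q-integer [n]_q with recursion [n+1] = q[n] + 1. -/
def qn : ℕ → K
  | 0 => 0
  | (n+1) => q * qn n + 1

lemma qn_succ (n : ℕ) : qn q (n+1) = q * qn q n + 1 := rfl

lemma qn_eq (n : ℕ) : qn q n = ∑ i ∈ Finset.range n, q ^ i := by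
  induction n with
  | zero => simp [qn]
  | succ n ih => rw [qn_succ, ih, geom_sum_succ]

lemma qn_succ' (n : ℕ) : qn q (n+1) = qn q n + q ^ n := by
  rw [qn_eq, qn_eq, Finset.sum_range_succ]

abbrev F (K : Type*) [Field K] := (ℕ × ℕ) →₀ K

/-- Operator B̂ : e_{i,j} ↦ e_{i+1,j}. -/
def Bop : F K →ₗ[K] F K :=
  Finsupp.lsum K fun p => LinearMap.toSpanSingleton K _ (Finsupp.single (p.1 + 1, p.2) (1:K))

/-- Operator Â : e_{i,j} ↦ q^i e_{i,j+1} + [i]_q e_{i-1,j}. -/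
def Aop : F K →ₗ[K] F K :=
  Finsupp.lsum K fun p => LinearMap.toSpanSingleton K _
    (Finsupp.single (p.1, p.2 + 1) (q ^ p.1) + Finsupp.single (p.1 - 1, p.2) (qn q p.1))

lemma Bop_single (p : ℕ × ℕ) (c : K) :
    Bop (Finsupp.single p c) = Finsupp.single (p.1 + 1, p.2) c := by
  simp [Bop, LinearMap.toSpanSingleton_apply, Finsupp.smul_single]

lemma Aop_single (p : ℕ × ℕ) (c : K) :
    Aop q (Finsupp.single p c) =
      Finsupp.single (p.1, p.2 + 1) (q ^ p.1 * c) + Finsupp.single (p.1 - 1, p.2) (qn q p.1 * c) := by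
  simp [Aop, LinearMap.toSpanSingleton_apply, smul_add, Finsupp.smul_single, mul_comm]

lemma rel_ops : (Aop q (K := K)) * Bop = q • (Bop * Aop q) + 1 := by
  apply Finsupp.lhom_ext
  intro p c
  rcases p with ⟨i, j⟩
  simp only [Module.End.mul_apply, LinearMap.add_apply, LinearMap.smul_apply, Module.End.one_apply,
    Bop_single, Aop_single, map_add, Finsupp.smul_single, smul_eq_mul, Nat.add_sub_cancel]
  rcases i with _ | i
  · simp [qn, Finsupp.single_zero]
  · simp only [smul_add, Finsupp.smul_single, smul_eq_mul, Nat.add_sub_cancel]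
    have h1 : (q:K) ^ (i+1+1) * c = q * (q ^ (i+1) * c) := by ring
    have h2 : qn q (i+1+1) * c = q * (qn q (i+1) * c) + c := by rw [qn_succ]; ring
    rw [h1, h2, Finsupp.single_add]
    abel


/-- The representation of `H_q` on `F K`. -/
def phi : qHeis K q →ₐ[K] Module.End K (F K) :=
  RingQuot.liftAlgHom K ⟨FreeAlgebra.lift K ![Aop q, Bop], by
    rintro x y ⟨⟩
    simp only [map_mul, map_add, map_smul, map_one, FreeAlgebra.lift_ι_apply,
      Matrix.cons_val_zero, Matrix.cons_val_one, Matrix.head_cons]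
    exact rel_ops q⟩

lemma phi_A : phi q (qA K q) = Aop q := by
  rw [phi, qA, RingQuot.liftAlgHom_mkAlgHom_apply, FreeAlgebra.lift_ι_apply]
  rfl

lemma phi_B : phi q (qB K q) = Bop := by
  rw [phi, qB, RingQuot.liftAlgHom_mkAlgHom_apply, FreeAlgebra.lift_ι_apply]
  rfl

/-- Evaluation at the vacuum vector `e₀₀`. -/
def ev : qHeis K q →ₗ[K] F K where
  toFun x := phi q x (Finsupp.single (0,0) (1:K))
  map_add' x y := by simp [map_add]
  map_smul' c x := by simp [map_smul]

lemma ev_apply (x : qHeis K q) : ev q x = phi q x (Finsupp.single (0,0) (1:K)) := rfl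

lemma ev_mul (x y : qHeis K q) : ev q (x * y) = phi q x (ev q y) := by
  simp [ev_apply, map_mul]

/-- Monomial `B^i * A^j`. -/
def mon (p : ℕ × ℕ) : qHeis K q := qB K q ^ p.1 * qA K q ^ p.2

lemma ev_mon (p : ℕ × ℕ) : ev q (mon q p) = Finsupp.single p 1 := by
  rcases p with ⟨i, j⟩
  have hA : ∀ j : ℕ, phi q (qA K q ^ j) (Finsupp.single ((0:ℕ),(0:ℕ)) (1:K))
      = Finsupp.single (0, j) 1 := by
    intro j
    induction j with
    | zero => simp [map_pow]
    | succ j ih =>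
      rw [pow_succ', map_mul, Module.End.mul_apply, ih, phi_A, Aop_single]
      simp [qn]
  have hB : ∀ i (v : ℕ × ℕ), phi q (qB K q ^ i) (Finsupp.single v (1:K))
      = Finsupp.single (v.1 + i, v.2) 1 := by
    intro i
    induction i with
    | zero => simp [map_pow]
    | succ i ih =>
      intro v
      rw [pow_succ, map_mul, Module.End.mul_apply, phi_B, Bop_single]
      simpa [add_assoc, add_comm 1 i] using ih (v.1+1, v.2)
  rw [mon, ev_apply, map_mul, Module.End.mul_apply, hA, hB]
  simp


lemma relAB : qA K q * qB K q = q • (qB K q * qA K q) + 1 := by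
  have h := RingQuot.mkAlgHom_rel K (qHeisRel.rel (K := K) (q := q))
  simpa only [map_mul, map_add, map_smul, map_one, qA, qB] using h

lemma Apow_succ_mul_B (j : ℕ) :
    qA K q ^ (j+1) * qB K q
      = q ^ (j+1) • (qB K q * qA K q ^ (j+1)) + qn q (j+1) • qA K q ^ j := by
  induction j with
  | zero => simpa [qn] using relAB q
  | succ j ih =>
    have : qA K q ^ (j+1+1) * qB K q = qA K q * (qA K q ^ (j+1) * qB K q) := by
      rw [← mul_assoc, ← pow_succ']
    rw [this, ih, mul_add, mul_smul_comm, mul_smul_comm, ← mul_assoc, relAB q]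
    rw [add_mul, smul_mul_assoc, one_mul]
    rw [mul_assoc, ← pow_succ', ← pow_succ' (qA K q) j, qn_succ' q (j+1)]
    module

lemma Apow_mul_B (j : ℕ) :
    qA K q ^ j * qB K q
      = q ^ j • (qB K q * qA K q ^ j) + qn q j • qA K q ^ (j-1) := by
  cases j with
  | zero => simp [qn]
  | succ j => simpa using Apow_succ_mul_B q j

/-- Span of monomials with total degree `< d`. -/
def Mlt (d : ℕ) : Submodule K (qHeis K q) :=
  Submodule.span K {x | ∃ p : ℕ × ℕ, p.1 + p.2 < d ∧ x = mon q p}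

lemma mon_mem_Mlt {p : ℕ × ℕ} {d : ℕ} (h : p.1 + p.2 < d) : mon q p ∈ Mlt q d :=
  Submodule.subset_span ⟨p, h, rfl⟩

lemma Mlt_mono {d d' : ℕ} (h : d ≤ d') : Mlt q d ≤ Mlt q d' :=
  Submodule.span_mono (fun x ⟨p, hp, he⟩ => ⟨p, lt_of_lt_of_le hp h, he⟩)

lemma mon_mul_A (p : ℕ × ℕ) : mon q p * qA K q = mon q (p.1, p.2 + 1) := by
  rw [mon, mon, mul_assoc, ← pow_succ]

lemma B_mul_mon (p : ℕ × ℕ) : qB K q * mon q p = mon q (p.1 + 1, p.2) := by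
  rw [mon, mon, ← mul_assoc, ← pow_succ']

lemma mon_mul_B (p : ℕ × ℕ) :
    mon q p * qB K q
      = q ^ p.2 • mon q (p.1 + 1, p.2) + qn q p.2 • mon q (p.1, p.2 - 1) := by
  rw [mon, mul_assoc, Apow_mul_B]
  rw [mul_add, mul_smul_comm, mul_smul_comm, ← mul_assoc, ← pow_succ, mon, mon]

lemma Mlt_mul_A {d : ℕ} {x : qHeis K q} (h : x ∈ Mlt q d) : x * qA K q ∈ Mlt q (d+1) := by
  induction h using Submodule.span_induction with
  | mem x hx =>
    obtain ⟨p, hp, rfl⟩ := hx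
    rw [mon_mul_A]
    exact mon_mem_Mlt q (by dsimp; omega)
  | zero => simpa using Submodule.zero_mem _
  | add x y _ _ hx hy => rw [add_mul]; exact Submodule.add_mem _ hx hy
  | smul c x _ hx => rw [smul_mul_assoc]; exact Submodule.smul_mem _ _ hx

lemma Mlt_mul_B {d : ℕ} {x : qHeis K q} (h : x ∈ Mlt q d) : x * qB K q ∈ Mlt q (d+1) := by
  induction h using Submodule.span_induction with
  | mem x hx =>
    obtain ⟨p, hp, rfl⟩ := hx
    rw [mon_mul_B]
    refine Submodule.add_mem _ (Submodule.smul_mem _ _ ?_) (Submodule.smul_mem _ _ ?_)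
    · exact mon_mem_Mlt q (by simp; omega)
    · exact mon_mem_Mlt q (by simp; omega)
  | zero => simpa using Submodule.zero_mem _
  | add x y _ _ hx hy => rw [add_mul]; exact Submodule.add_mem _ hx hy
  | smul c x _ hx => rw [smul_mul_assoc]; exact Submodule.smul_mem _ _ hx

lemma B_mul_Mlt {d : ℕ} {x : qHeis K q} (h : x ∈ Mlt q d) : qB K q * x ∈ Mlt q (d+1) := by
  induction h using Submodule.span_induction with
  | mem x hx =>
    obtain ⟨p, hp, rfl⟩ := hx
    rw [B_mul_mon]
    exact mon_mem_Mlt q (by simp; omega)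
  | zero => simpa using Submodule.zero_mem _
  | add x y _ _ hx hy => rw [mul_add]; exact Submodule.add_mem _ hx hy
  | smul c x _ hx => rw [mul_smul_comm]; exact Submodule.smul_mem _ _ hx

lemma Bpow_mul_Mlt {d : ℕ} {x : qHeis K q} (h : x ∈ Mlt q d) (i : ℕ) :
    qB K q ^ i * x ∈ Mlt q (d+i) := by
  induction i with
  | zero => simpa using h
  | succ i ih =>
    have : qB K q ^ (i+1) * x = qB K q * (qB K q ^ i * x) := by
      rw [← mul_assoc, ← pow_succ']
    rw [this]
    exact B_mul_Mlt q (by simpa [add_assoc] using ih)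

lemma Mlt_mul_Apow {d : ℕ} {x : qHeis K q} (h : x ∈ Mlt q d) (l : ℕ) :
    x * qA K q ^ l ∈ Mlt q (d+l) := by
  induction l with
  | zero => simpa using h
  | succ l ih =>
    have : x * qA K q ^ (l+1) = (x * qA K q ^ l) * qA K q := by
      rw [mul_assoc, ← pow_succ]
    rw [this]
    exact Mlt_mul_A q (by simpa [add_assoc] using ih)

/-- The main commutation lemma: `A^j B^k = q^(jk) B^k A^j + lower order`. -/
lemma Apow_mul_Bpow (j k : ℕ) :
    ∃ e ∈ Mlt q (j + k),
      qA K q ^ j * qB K q ^ k = q ^ (j * k) • (qB K q ^ k * qA K q ^ j) + e := by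
  induction k with
  | zero => exact ⟨0, Submodule.zero_mem _, by simp⟩
  | succ k ih =>
    obtain ⟨e, he, heq⟩ := ih
    have h1 : qA K q ^ j * qB K q ^ (k+1) = (qA K q ^ j * qB K q ^ k) * qB K q := by
      rw [mul_assoc, ← pow_succ]
    rw [h1, heq, add_mul, smul_mul_assoc, mul_assoc]
    rw [Apow_mul_B q j, mul_add, mul_smul_comm, mul_smul_comm, ← mul_assoc, ← pow_succ]
    rw [smul_add, smul_smul, smul_smul]
    refine ⟨(q ^ (j*k) * qn q j) • (qB K q ^ k * qA K q ^ (j-1)) + e * qB K q,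
      Submodule.add_mem _ ?_ ?_, by ring_nf; rw [add_assoc]⟩
    · rcases j with _ | j
      · simp [qn]
      · refine Submodule.smul_mem _ _ ?_
        have : qB K q ^ k * qA K q ^ (j+1-1) = mon q (k, j) := by simp [mon]
        rw [this]
        exact mon_mem_Mlt q (by simp; omega)
    · exact Mlt_mul_B q he


lemma mon_mul_mon (p p' : ℕ × ℕ) :
    ∃ e ∈ Mlt q (p.1 + p.2 + p'.1 + p'.2),
      mon q p * mon q p' = q ^ (p.2 * p'.1) • mon q (p.1 + p'.1, p.2 + p'.2) + e := by
  obtain ⟨e, he, heq⟩ := Apow_mul_Bpow q p.2 p'.1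
  refine ⟨qB K q ^ p.1 * e * qA K q ^ p'.2, ?_, ?_⟩
  · exact Mlt_mono q (by omega) (Mlt_mul_Apow q (Bpow_mul_Mlt q he p.1) p'.2)
  · calc mon q p * mon q p'
        = qB K q ^ p.1 * ((qA K q ^ p.2 * qB K q ^ p'.1) * qA K q ^ p'.2) := by
          rw [mon, mon, mul_assoc, ← mul_assoc (qA K q ^ p.2)]
      _ = qB K q ^ p.1 * ((q ^ (p.2 * p'.1) • (qB K q ^ p'.1 * qA K q ^ p.2) + e)
            * qA K q ^ p'.2) := by rw [heq]
      _ = q ^ (p.2 * p'.1) • (qB K q ^ p.1 * (qB K q ^ p'.1 * qA K q ^ p.2 * qA K q ^ p'.2))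
            + qB K q ^ p.1 * e * qA K q ^ p'.2 := by
          rw [add_mul, smul_mul_assoc, mul_add, mul_smul_comm, ← mul_assoc (qB K q ^ p.1) e]
      _ = q ^ (p.2 * p'.1) • mon q (p.1 + p'.1, p.2 + p'.2)
            + qB K q ^ p.1 * e * qA K q ^ p'.2 := by
          rw [mul_assoc (qB K q ^ p'.1), ← mul_assoc (qB K q ^ p.1), ← pow_add, ← pow_add]
          simp [mon]

/-- The span of all monomials. -/
def Tspan : Submodule K (qHeis K q) := Submodule.span K (Set.range (mon q))

lemma Mlt_le_Tspan (d : ℕ) : Mlt q d ≤ Tspan q :=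
  Submodule.span_mono (fun x ⟨p, _, he⟩ => ⟨p, he.symm⟩)

lemma Tspan_mul {x y : qHeis K q} (hx : x ∈ Tspan q) (hy : y ∈ Tspan q) :
    x * y ∈ Tspan q := by
  induction hx using Submodule.span_induction with
  | mem x hx =>
    obtain ⟨p, rfl⟩ := hx
    induction hy using Submodule.span_induction with
    | mem y hy =>
      obtain ⟨p', rfl⟩ := hy
      obtain ⟨e, he, heq⟩ := mon_mul_mon q p p'
      rw [heq]
      exact Submodule.add_mem _
        (Submodule.smul_mem _ _ (Submodule.subset_span ⟨_, rfl⟩))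
        (Mlt_le_Tspan q _ he)
    | zero => simpa using Submodule.zero_mem _
    | add y z _ _ hy hz => rw [mul_add]; exact Submodule.add_mem _ hy hz
    | smul c y _ hy => rw [mul_smul_comm]; exact Submodule.smul_mem _ _ hy
  | zero => simpa using Submodule.zero_mem _
  | add x z _ _ hx hz => rw [add_mul]; exact Submodule.add_mem _ hx hz
  | smul c x _ hx => rw [smul_mul_assoc]; exact Submodule.smul_mem _ _ hx

lemma mon_zero : mon q ((0 : ℕ), (0 : ℕ)) = (1 : qHeis K q) := by simp [mon]

lemma Tspan_eq_top : Tspan q = (⊤ : Submodule K (qHeis K q)) := by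
  rw [eq_top_iff]
  intro x hx
  clear hx
  obtain ⟨y, rfl⟩ := RingQuot.mkAlgHom_surjective K (qHeisRel K q) x
  induction y using FreeAlgebra.induction with
  | grade0 r =>
    rw [AlgHom.commutes, Algebra.algebraMap_eq_smul_one, ← mon_zero q]
    exact Submodule.smul_mem _ _ (Submodule.subset_span ⟨_, rfl⟩)
  | grade1 i =>
    fin_cases i
    · show RingQuot.mkAlgHom K (qHeisRel K q) (FreeAlgebra.ι K 0) ∈ Tspan q
      have h : RingQuot.mkAlgHom K (qHeisRel K q) (FreeAlgebra.ι K 0) = mon q (0, 1) := by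
        simp [mon, qA]
      rw [h]; exact Submodule.subset_span ⟨_, rfl⟩
    · show RingQuot.mkAlgHom K (qHeisRel K q) (FreeAlgebra.ι K 1) ∈ Tspan q
      have h : RingQuot.mkAlgHom K (qHeisRel K q) (FreeAlgebra.ι K 1) = mon q (1, 0) := by
        simp [mon, qB]
      rw [h]; exact Submodule.subset_span ⟨_, rfl⟩
  | mul a b ha hb => rw [map_mul]; exact Tspan_mul q ha hb
  | add a b ha hb => rw [map_add]; exact Submodule.add_mem _ ha hb

/-- The inverse map sending `single p c` to `c • (B^p₁ A^p₂)`. -/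
def mu : F K →ₗ[K] qHeis K q :=
  Finsupp.lsum K fun p => LinearMap.toSpanSingleton K _ (mon q p)

lemma mu_single (p : ℕ × ℕ) (c : K) : mu q (Finsupp.single p c) = c • mon q p := by
  simp [mu, LinearMap.toSpanSingleton_apply]

lemma ev_mu (g : F K) : ev q (mu q g) = g := by
  have : (ev q).comp (mu q) = LinearMap.id := by
    apply Finsupp.lhom_ext
    intro p c
    simp [mu_single, map_smul, ev_mon, Finsupp.smul_single]
  exact DFunLike.congr_fun this g

lemma mu_surjective : Function.Surjective (mu q) := by
  intro x
  have hx : x ∈ Tspan q := (Tspan_eq_top q).symm ▸ Submodule.mem_top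
  have : Tspan q ≤ LinearMap.range (mu q) := by
    rw [Tspan]
    rw [Submodule.span_le]
    rintro _ ⟨p, rfl⟩
    exact ⟨Finsupp.single p 1, by simp [mu_single]⟩
  obtain ⟨g, hg⟩ := this hx
  exact ⟨g, hg⟩

lemma eq_mu_ev (x : qHeis K q) : x = mu q (ev q x) := by
  obtain ⟨g, rfl⟩ := mu_surjective q x
  rw [ev_mu]

lemma ev_injective : Function.Injective (ev q) := by
  intro x y hxy
  rw [eq_mu_ev q x, eq_mu_ev q y, hxy]

/-- Coefficients supported in total degree `< d`. -/
def Flt (d : ℕ) : Submodule K (F K) := Finsupp.supported K K {p : ℕ × ℕ | p.1 + p.2 < d}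

lemma ev_Mlt {d : ℕ} {x : qHeis K q} (h : x ∈ Mlt q d) : ev q x ∈ Flt d := by
  induction h using Submodule.span_induction with
  | mem x hx =>
    obtain ⟨p, hp, rfl⟩ := hx
    rw [ev_mon]
    exact Finsupp.single_mem_supported K 1 hp
  | zero => simpa using Submodule.zero_mem _
  | add x y _ _ hx hy => rw [map_add]; exact Submodule.add_mem _ hx hy
  | smul c x _ hx => rw [map_smul]; exact Submodule.smul_mem _ _ hx

lemma Flt_apply {d : ℕ} {f : F K} (h : f ∈ Flt d) {p : ℕ × ℕ} (hp : d ≤ p.1 + p.2) :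
    f p = 0 := by
  by_contra hne
  have : p ∈ {p : ℕ × ℕ | p.1 + p.2 < d} := (Finsupp.mem_supported K f).mp h
    (Finsupp.mem_support_iff.mpr hne)
  simp only [Set.mem_setOf_eq] at this
  omega


lemma mu_apply (g : F K) : mu q g = ∑ p ∈ g.support, g p • mon q p := by
  simp [mu, Finsupp.lsum_apply, Finsupp.sum, LinearMap.toSpanSingleton_apply]

lemma one_ne_zero' : (1 : qHeis K q) ≠ 0 := by
  intro h0
  have h1 := congrArg (ev q) h0
  rw [map_zero, ← mon_zero q, ev_mon] at h1
  exact one_ne_zero (Finsupp.single_eq_zero.mp h1)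

lemma qmul_ne_zero (hq : q ≠ 0) {x y : qHeis K q} (hx : x ≠ 0) (hy : y ≠ 0) :
    x * y ≠ 0 := by
  set g := ev q x with hg
  set h := ev q y with hh
  have hgne : g ≠ 0 := fun h0 => hx (by rw [eq_mu_ev q x, ← hg, h0, map_zero])
  have hhne : h ≠ 0 := fun h0 => hy (by rw [eq_mu_ev q y, ← hh, h0, map_zero])
  -- leading pair of g
  obtain ⟨p0, hp0mem, hle1⟩ : ∃ p0 ∈ g.support, ∀ p ∈ g.support,
      toLex (p.1 + p.2, p.1) ≤ toLex (p0.1 + p0.2, p0.1) := by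
    have hne : (g.support.image (fun p : ℕ × ℕ => toLex (p.1 + p.2, p.1))).Nonempty :=
      Finset.Nonempty.image (Finsupp.support_nonempty_iff.mpr hgne) _
    obtain ⟨p0, hp0, hmax⟩ := Finset.mem_image.mp (Finset.max'_mem _ hne)
    exact ⟨p0, hp0, fun p hp => hmax ▸ Finset.le_max' _ (toLex (p.1 + p.2, p.1)) (Finset.mem_image_of_mem (fun p : ℕ × ℕ => toLex (p.1 + p.2, p.1)) hp)⟩
  obtain ⟨p1, hp1mem, hle2⟩ : ∃ p1 ∈ h.support, ∀ p ∈ h.support,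
      toLex (p.1 + p.2, p.1) ≤ toLex (p1.1 + p1.2, p1.1) := by
    have hne : (h.support.image (fun p : ℕ × ℕ => toLex (p.1 + p.2, p.1))).Nonempty :=
      Finset.Nonempty.image (Finsupp.support_nonempty_iff.mpr hhne) _
    obtain ⟨p1, hp1, hmax⟩ := Finset.mem_image.mp (Finset.max'_mem _ hne)
    exact ⟨p1, hp1, fun p hp => hmax ▸ Finset.le_max' _ (toLex (p.1 + p.2, p.1)) (Finset.mem_image_of_mem (fun p : ℕ × ℕ => toLex (p.1 + p.2, p.1)) hp)⟩
  have key1 : ∀ p ∈ g.support,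
      p.1 + p.2 < p0.1 + p0.2 ∨ (p.1 + p.2 = p0.1 + p0.2 ∧ p.1 ≤ p0.1) :=
    fun p hp => Prod.Lex.le_iff.mp (hle1 p hp)
  have key2 : ∀ p ∈ h.support,
      p.1 + p.2 < p1.1 + p1.2 ∨ (p.1 + p.2 = p1.1 + p1.2 ∧ p.1 ≤ p1.1) :=
    fun p hp => Prod.Lex.le_iff.mp (hle2 p hp)
  set P : ℕ × ℕ := (p0.1 + p1.1, p0.2 + p1.2) with hP
  -- the coefficient of each monomial product at P
  have hterm : ∀ p ∈ g.support, ∀ p' ∈ h.support,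
      ev q (mon q p * mon q p') P
        = if p = p0 ∧ p' = p1 then q ^ (p.2 * p'.1) else 0 := by
    intro p hp p' hp'
    obtain ⟨e, he, heq⟩ := mon_mul_mon q p p'
    have hb1 := key1 p hp
    have hb2 := key2 p' hp'
    have he0 : (ev q e) P = 0 := by
      refine Flt_apply (ev_Mlt q he) ?_
      rw [hP]; dsimp only
      rcases hb1 with h1 | ⟨h1, _⟩ <;> rcases hb2 with h2 | ⟨h2, _⟩ <;> omega
    rw [heq, map_add, map_smul, ev_mon, Finsupp.add_apply, Finsupp.smul_apply, he0, add_zero,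
      Finsupp.single_apply, smul_eq_mul]
    by_cases hc : p = p0 ∧ p' = p1
    · rcases hc with ⟨rfl, rfl⟩
      simp [hP]
    · rw [if_neg hc, if_neg, mul_zero]
      intro heqP
      rw [hP, Prod.mk.injEq] at heqP
      apply hc
      rcases hb1 with h1 | ⟨h1, h1'⟩ <;> rcases hb2 with h2 | ⟨h2, h2'⟩ <;>
        [skip; skip; skip;
          exact ⟨Prod.ext (by omega) (by omega), Prod.ext (by omega) (by omega)⟩] <;>
        omega
  have hxy : ev q (x * y)
      = ∑ p ∈ g.support, ∑ p' ∈ h.support, (g p * h p') • ev q (mon q p * mon q p') := by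
    conv_lhs => rw [eq_mu_ev q x, eq_mu_ev q y, ← hg, ← hh, mu_apply, mu_apply]
    rw [Finset.sum_mul, map_sum]
    refine Finset.sum_congr rfl fun p hp => ?_
    rw [Finset.mul_sum, map_sum]
    refine Finset.sum_congr rfl fun p' hp' => ?_
    rw [smul_mul_assoc, mul_smul_comm, smul_smul, map_smul]
  have hcoeff : ev q (x * y) P = (g p0 * h p1) * q ^ (p0.2 * p1.1) := by
    rw [hxy, Finsupp.finset_sum_apply]
    rw [Finset.sum_eq_single p0]
    · rw [Finsupp.finset_sum_apply, Finset.sum_eq_single p1]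
      · rw [Finsupp.smul_apply, hterm p0 hp0mem p1 hp1mem, if_pos ⟨rfl, rfl⟩, smul_eq_mul]
      · intro p' hp' hne
        rw [Finsupp.smul_apply, hterm p0 hp0mem p' hp', if_neg (by tauto), smul_zero]
      · intro hcon; exact absurd hp1mem hcon
    · intro p hp hne
      rw [Finsupp.finset_sum_apply]
      refine Finset.sum_eq_zero fun p' hp' => ?_
      rw [Finsupp.smul_apply, hterm p hp p' hp', if_neg (by tauto), smul_zero]
    · intro hcon; exact absurd hp0mem hcon
  intro h0
  rw [h0, map_zero] at hcoeff
  have : (g p0 * h p1) * q ^ (p0.2 * p1.1) ≠ 0 :=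
    mul_ne_zero (mul_ne_zero (Finsupp.mem_support_iff.mp hp0mem)
      (Finsupp.mem_support_iff.mp hp1mem)) (pow_ne_zero _ hq)
  exact this (by rw [← hcoeff]; rfl)

end QHAux

/-- For every field `K` and `q ∈ K`, `q ≠ 0`, the center `Z(H_q)` of the `q`-deformed
Heisenberg algebra is an integral domain: a nontrivial (commutative) ring in which the
product of any two nonzero elements is nonzero. -/
theorem qHeis_center_isDomain
    {K : Type*} [Field K] (q : K) (hq : q ≠ 0) :
    IsDomain (Subalgebra.center K (qHeis K q)) := by
  haveI hnt : Nontrivial (qHeis K q) := ⟨1, 0, QHAux.one_ne_zero' q⟩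
  haveI : NoZeroDivisors (qHeis K q) := ⟨fun {a b} hab => by
    by_contra hcon
    push_neg at hcon
    exact QHAux.qmul_ne_zero q hq hcon.1 hcon.2 hab⟩
  haveI : Nontrivial (Subalgebra.center K (qHeis K q)) :=
    ⟨1, 0, fun hcon => QHAux.one_ne_zero' q (by simpa using congrArg Subtype.val hcon)⟩
  haveI : NoZeroDivisors (Subalgebra.center K (qHeis K q)) := ⟨fun {a b} hab => by
    have hab' : (a : qHeis K q) * (b : qHeis K q) = 0 := by
      exact_mod_cast congrArg Subtype.val hab
    rcases mul_eq_zero.mp hab' with h1 | h1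
    · exact Or.inl (Subtype.ext h1)
    · exact Or.inr (Subtype.ext h1)⟩
  haveI : IsCancelMulZero (Subalgebra.center K (qHeis K q)) :=
    NoZeroDivisors.to_isCancelMulZero (Subalgebra.center K (qHeis K q))
  exact {}
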